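/- Let X be a topological space and 𝒢 a locally finite cover of X by cozero sets. Then there exists a disjoint locally finite cover of X by functionally ambiguous sets which refines 𝒢 (i.e. a pairwise disjoint, locally finite family of functionally ambiguous sets covering X, each member of which is contained in some member of 𝒢). -/

import Mathlib

open Set Function Filter Topology

universe u

/-- An *equiconnecting* map on `Z`: a map `λ : Z × Z × [0,1] → Z`, continuous on
`Z × Z × [0,1]`, with `λ(x,y,0) = x`, `λ(x,y,1) = y` and `λ(x,x,t) = x`. -/
structure IsEquiconnecting {Z : Type*} [TopologicalSpace Z] (lam : Z → Z → ℝ → Z) : Prop where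
  continuousOn : ContinuousOn (fun p : Z × Z × ℝ => lam p.1 p.2.1 p.2.2)
    (Set.univ ×ˢ Set.univ ×ˢ Set.Icc (0 : ℝ) 1)
  map_zero : ∀ x y : Z, lam x y 0 = x
  map_one : ∀ x y : Z, lam x y 1 = y
  map_diag : ∀ x : Z, ∀ t ∈ Set.Icc (0 : ℝ) 1, lam x x t = x

/-- `lambdaIter lam n` is the map `λ_{n+1} : Z^{n+1} × S_{n+1} → Z` from the paper,
defined recursively. -/
noncomputable def lambdaIter {Z : Type*} (lam : Z → Z → ℝ → Z) :
    (n : ℕ) → (Fin (n + 1) → Z) → (Fin (n + 1) → ℝ) → Z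
  | 0, x, _ => x 0
  | n + 1, x, a =>
      if 0 < a 0 + a 1 then
        lambdaIter lam n
          (Fin.cons (lam (x 0) (x 1) (a 1 / (a 0 + a 1))) fun i => x i.succ.succ)
          (Fin.cons (a 0 + a 1) fun i => a i.succ.succ)
      else
        lambdaIter lam n (fun i => x i.succ) fun i => a i.succ

/-- `lambdaIterSet lam A n` is the set `λ^n(A)`:  `λ^0(A) = A` and
`λ^{n+1}(A) = λ(λ^n(A) × A × [0,1])`. -/
def lambdaIterSet {Z : Type*} (lam : Z → Z → ℝ → Z) (A : Set Z) : ℕ → Set Z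
  | 0 => A
  | n + 1 => (fun p : Z × Z × ℝ => lam p.1 p.2.1 p.2.2) ''
      (lambdaIterSet lam A n ×ˢ A ×ˢ Set.Icc (0 : ℝ) 1)

/-- `λ^∞(A) = ⋃_{n ≥ 1} λ^n(A)`. -/
def lambdaInftySet {Z : Type*} (lam : Z → Z → ℝ → Z) (A : Set Z) : Set Z :=
  ⋃ n : ℕ, lambdaIterSet lam A (n + 1)

/-- An equiconnected space `(Z, λ)` is locally convex if every point has arbitrarily small
neighborhoods `V` with `λ^∞(V)` inside a given neighborhood. -/
def IsLocallyConvexEquiconnected {Z : Type*} [TopologicalSpace Z] (lam : Z → Z → ℝ → Z) :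
    Prop :=
  ∀ z : Z, ∀ U ∈ nhds z, ∃ V ∈ nhds z, lambdaInftySet lam V ⊆ U

/-- A map is Baire-one if it is the pointwise limit of a sequence of continuous maps. -/
def BaireOne {Y Z : Type*} [TopologicalSpace Y] [TopologicalSpace Z] (g : Y → Z) : Prop :=
  ∃ h : ℕ → Y → Z, (∀ n, Continuous (h n)) ∧
    ∀ y, Filter.Tendsto (fun n => h n y) Filter.atTop (nhds (g y))

/-- A locally finite partition of unity on `X`: continuous `[0,1]`-valued functions whose
supports (closures of the sets where they are nonzero) form a locally finite family and whose
pointwise sum is `1`. -/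
def IsLocFinPartitionOfUnity {I X : Type*} [TopologicalSpace X] (φ : I → X → ℝ) : Prop :=
  (∀ i, Continuous (φ i)) ∧ (∀ i x, φ i x ∈ Set.Icc (0 : ℝ) 1) ∧
    (LocallyFinite fun i => closure (Function.support (φ i))) ∧ ∀ x, ∑ᶠ i, φ i x = 1

/-- A strong PP-space: for every dense `D ⊆ X` there are a sequence of locally finite
partitions of unity and families of points of `D` such that points attached to the supports
containing `x` converge to `x` uniformly in the index, in the sense of condition (3). -/
def IsStrongPPSpace (X : Type*) [TopologicalSpace X] : Prop :=
  ∀ D : Set X, Dense D →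
    ∃ (I : ℕ → Type u) (φ : ∀ n, I n → X → ℝ) (p : ∀ n, I n → X),
      (∀ n, IsLocFinPartitionOfUnity (φ n)) ∧ (∀ n i, p n i ∈ D) ∧
      ∀ x : X, ∀ U ∈ nhds x, ∃ n₀ : ℕ, ∀ n ≥ n₀, ∀ i : I n,
        x ∈ closure (Function.support (φ n i)) → p n i ∈ U

/-- A zero set: the preimage of `{0}` under a continuous function `X → [0,1]`. -/
def IsZeroSet {X : Type*} [TopologicalSpace X] (A : Set X) : Prop :=
  ∃ f : X → ℝ, Continuous f ∧ (∀ x, f x ∈ Set.Icc (0 : ℝ) 1) ∧ A = f ⁻¹' {0}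

/-- A cozero set: the preimage of `(0,1]` under a continuous function `X → [0,1]`. -/
def IsCozeroSet {X : Type*} [TopologicalSpace X] (A : Set X) : Prop :=
  ∃ f : X → ℝ, Continuous f ∧ (∀ x, f x ∈ Set.Icc (0 : ℝ) 1) ∧ A = f ⁻¹' Set.Ioc (0 : ℝ) 1

/-- A functionally ambiguous set: simultaneously a countable union of zero sets and a
countable intersection of cozero sets. -/
def IsFunctionallyAmbiguous {X : Type*} [TopologicalSpace X] (A : Set X) : Prop :=
  (∃ F : ℕ → Set X, (∀ n, IsZeroSet (F n)) ∧ A = ⋃ n, F n) ∧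
    ∃ B : ℕ → Set X, (∀ n, IsCozeroSet (B n)) ∧ A = ⋂ n, B n

/-- A discrete family of sets: every point has a neighborhood meeting at most one member. -/
def IsDiscreteFamily {I X : Type*} [TopologicalSpace X] (A : I → Set X) : Prop :=
  ∀ x : X, ∃ U ∈ nhds x, {i : I | (U ∩ A i).Nonempty}.Subsingleton

/-- Weakly collectionwise normal: every discrete family of zero sets can be separated by a
discrete family of cozero sets. -/
def WeaklyCollectionwiseNormal (X : Type*) [TopologicalSpace X] : Prop :=
  ∀ (S : Type u) (F : S → Set X), (∀ s, IsZeroSet (F s)) → IsDiscreteFamily F →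
    ∃ U : S → Set X, (∀ s, IsCozeroSet (U s)) ∧ IsDiscreteFamily U ∧ ∀ s, F s ⊆ U s

/-- A contracting structure on `Z`: a continuous `γ : Z × [0,1] → Z` with `γ(z,0) = z` and
`γ(z,1) = z₀`. -/
structure IsContracting {Z : Type*} [TopologicalSpace Z] (γ : Z → ℝ → Z) (z₀ : Z) :
    Prop where
  continuousOn : ContinuousOn (fun p : Z × ℝ => γ p.1 p.2) (Set.univ ×ˢ Set.Icc (0 : ℝ) 1)
  map_zero : ∀ z : Z, γ z 0 = z
  map_one : ∀ z : Z, γ z 1 = z₀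


/-- Key lemma: `{f > 0} ∩ {g = 0}` is functionally ambiguous for `[0,1]`-valued continuous
`f`, `g`. -/
lemma funcAmb_aux {X : Type*} [TopologicalSpace X] (f g : X → ℝ)
    (hf : Continuous f) (hg : Continuous g)
    (hf01 : ∀ x, f x ∈ Set.Icc (0:ℝ) 1) (hg01 : ∀ x, g x ∈ Set.Icc (0:ℝ) 1) :
    IsFunctionallyAmbiguous ({x | 0 < f x} ∩ {x | g x = 0}) := by
  constructor
  · refine ⟨fun n => (fun x => max (max 0 (((n:ℝ)+1)⁻¹ - f x)) (g x)) ⁻¹' {0}, fun n => ?_, ?_⟩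
    · refine ⟨_, (continuous_const.max (continuous_const.sub hf)).max hg,
        fun x => ⟨le_max_of_le_left (le_max_left _ _), ?_⟩, rfl⟩
      refine max_le (max_le zero_le_one ?_) (hg01 x).2
      have h1 : ((n:ℝ)+1)⁻¹ ≤ 1 := by
        rw [inv_le_one_iff₀]; right; linarith [Nat.cast_nonneg (α := ℝ) n]
      show ((n:ℝ)+1)⁻¹ - f x ≤ 1
      linarith [(hf01 x).1]
    · ext x
      simp only [mem_iUnion, mem_preimage, mem_singleton_iff, mem_inter_iff, mem_setOf_eq]
      constructor
      · rintro ⟨hfx, hgx⟩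
        obtain ⟨n, hn⟩ := exists_nat_gt (f x)⁻¹
        refine ⟨n, le_antisymm (max_le (max_le le_rfl ?_) hgx.le)
          (le_max_of_le_left (le_max_left _ _))⟩
        have : ((n:ℝ)+1)⁻¹ ≤ f x := by
          rw [inv_le_comm₀ (by positivity) hfx]
          linarith
        linarith
      · rintro ⟨n, hn⟩
        have h1 : max 0 (((n:ℝ)+1)⁻¹ - f x) ≤ 0 ∧ g x ≤ 0 := by
          rw [← max_le_iff, hn]
        have h2 : ((n:ℝ)+1)⁻¹ - f x ≤ 0 := by
          have := h1.1; rw [max_le_iff] at this; exact this.2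
        have : (0:ℝ) < ((n:ℝ)+1)⁻¹ := by positivity
        exact ⟨by linarith, le_antisymm h1.2 (hg01 x).1⟩
  · refine ⟨fun n => (fun x => min (f x) (max 0 (1 - ((n:ℝ)+1) * g x))) ⁻¹' Set.Ioc 0 1,
      fun n => ⟨_, hf.min (continuous_const.max (continuous_const.sub (continuous_const.mul hg))),
        fun x => ⟨le_min (hf01 x).1 (le_max_left _ _),
        min_le_of_left_le (hf01 x).2⟩, rfl⟩, ?_⟩
    ext x
    simp only [mem_iInter, mem_preimage, mem_Ioc, mem_inter_iff, mem_setOf_eq]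
    constructor
    · rintro ⟨hfx, hgx⟩ n
      refine ⟨lt_min hfx ?_, min_le_of_left_le (hf01 x).2⟩
      rw [hgx]; simp
    · intro h
      have hf0 : 0 < f x := lt_of_lt_of_le (h 0).1 (min_le_left _ _)
      refine ⟨hf0, le_antisymm ?_ (hg01 x).1⟩
      by_contra hgx
      push_neg at hgx
      obtain ⟨n, hn⟩ := exists_nat_gt (g x)⁻¹
      have h2 : 0 < max 0 (1 - ((n:ℝ)+1) * g x) := lt_of_lt_of_le (h n).1 (min_le_right _ _)
      rw [lt_max_iff] at h2
      rcases h2 with h2 | h2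
      · exact lt_irrefl _ h2
      · have : (g x)⁻¹ < (n:ℝ) + 1 := by linarith
        rw [inv_lt_iff_one_lt_mul₀ hgx] at this
        nlinarith

/-- The union of a locally finite family of cozero sets is the cozero set of a single
function; equivalently its complement is the zero set of that function. -/
lemma locfin_union_cozero {X J : Type*} [TopologicalSpace X] (G : J → Set X)
    (hlf : LocallyFinite G) (hcz : ∀ j, IsCozeroSet (G j)) :
    ∃ g : X → ℝ, Continuous g ∧ (∀ x, g x ∈ Set.Icc (0:ℝ) 1) ∧
      ∀ x, (g x = 0 ↔ ∀ j, x ∉ G j) := by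
  choose f hfc hf01 hfG using hcz
  have hGf : ∀ j x, x ∈ G j ↔ 0 < f j x := by
    intro j x
    rw [hfG j]
    exact ⟨fun h => h.1, fun h => ⟨h, (hf01 j x).2⟩⟩
  have hsupp : ∀ j, Function.support (fun x => f j x) ⊆ G j := by
    intro j x hx
    rw [hGf]
    exact lt_of_le_of_ne (hf01 j x).1 (Ne.symm hx)
  have hSc : Continuous (fun x => ∑ᶠ j, f j x) :=
    continuous_finsum hfc (hlf.subset hsupp)
  have hptfin : ∀ x : X, (Function.support fun j => f j x).Finite := by
    intro x
    refine (hlf.point_finite x).subset fun j hj => ?_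
    show x ∈ G j
    rw [hGf]
    exact lt_of_le_of_ne (hf01 j x).1 (Ne.symm hj)
  have hS0 : ∀ x, 0 ≤ ∑ᶠ j, f j x := fun x => finsum_nonneg fun j => (hf01 j x).1
  refine ⟨fun x => min (∑ᶠ j, f j x) 1, hSc.min continuous_const,
    fun x => ⟨le_min (hS0 x) zero_le_one, min_le_right _ _⟩, fun x => ?_⟩
  constructor
  · intro h j hj
    have h' : min (∑ᶠ j, f j x) 1 = 0 := h
    have h1 : f j x ≤ ∑ᶠ j, f j x := single_le_finsum j (hptfin x) fun k => (hf01 k x).1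
    have h2 : ∑ᶠ j, f j x = 0 := by
      rcases min_cases (∑ᶠ j, f j x) 1 with ⟨h3, _⟩ | ⟨h3, h4⟩
      · rw [h3] at h'; exact h'
      · rw [h3] at h'; norm_num at h'
    rw [hGf] at hj
    linarith
  · intro h
    have : ∑ᶠ j, f j x = 0 := by
      have : ∀ j, f j x = 0 := by
        intro j
        refine le_antisymm ?_ (hf01 j x).1
        by_contra hc
        push_neg at hc
        exact h j ((hGf j x).2 hc)
      simp [this]
    show min (∑ᶠ j, f j x) 1 = 0
    rw [this]
    simp

/-- Every locally finite cover of a topological space by cozero sets admits a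
disjoint locally finite refinement by functionally ambiguous sets which still covers. -/
theorem exists_disjoint_ambiguous_refinement {X I : Type*} [TopologicalSpace X]
    (G : I → Set X) (hcover : ⋃ i, G i = Set.univ) (hlf : LocallyFinite G)
    (hcz : ∀ i, IsCozeroSet (G i)) :
    ∃ A : I → Set X, (⋃ i, A i = Set.univ) ∧ Pairwise (Function.onFun Disjoint A) ∧
      LocallyFinite A ∧ (∀ i, IsFunctionallyAmbiguous (A i)) ∧ ∀ i, ∃ j, A i ⊆ G j := by
  classical
  choose f hfc hf01 hfG using hcz
  have hGf : ∀ i x, x ∈ G i ↔ 0 < f i x := by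
    intro i x
    rw [hfG i]
    exact ⟨fun h => h.1, fun h => ⟨h, (hf01 i x).2⟩⟩
  -- well-order the index type
  let r : I → I → Prop := WellOrderingRel
  have hwf : WellFounded r := (WellOrderingRel.isWellOrder (α := I)).toIsWellFounded.wf
  -- for each i, the union of G j over j ≺ i is a cozero set with witness g i
  have hsub : ∀ i : I, ∃ g : X → ℝ, Continuous g ∧ (∀ x, g x ∈ Set.Icc (0:ℝ) 1) ∧
      ∀ x, (g x = 0 ↔ ∀ j : {j : I // r j i}, x ∉ G j.1) := by
    intro i
    exact locfin_union_cozero (fun j : {j : I // r j i} => G j.1)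
      (hlf.comp_injective Subtype.val_injective) (fun j => ⟨f j.1, hfc j.1, hf01 j.1, hfG j.1⟩)
  choose g hgc hg01 hg0 using hsub
  refine ⟨fun i => {x | 0 < f i x} ∩ {x | g i x = 0}, ?_, ?_, ?_, ?_, ?_⟩
  · -- cover
    ext x
    simp only [mem_iUnion, mem_univ, iff_true]
    have hxex : x ∈ ⋃ i, G i := by rw [hcover]; trivial
    rw [mem_iUnion] at hxex
    have hne : {i : I | x ∈ G i}.Nonempty := hxex
    refine ⟨hwf.min _ hne, ?_, ?_⟩
    · exact (hGf _ x).1 (hwf.min_mem _ hne)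
    · show g _ x = 0
      rw [hg0]
      rintro ⟨j, hj⟩ hxj
      exact hwf.not_lt_min {i : I | x ∈ G i} hxj hj
  · -- pairwise disjoint
    intro i j hij
    have key : ∀ a b : I, r a b →
        Disjoint ({x | 0 < f a x} ∩ {x | g a x = 0}) ({x | 0 < f b x} ∩ {x | g b x = 0}) := by
      intro a b hab
      rw [Set.disjoint_left]
      rintro x ⟨hxa, _⟩ ⟨_, hxb⟩
      have := (hg0 b x).1 hxb ⟨a, hab⟩
      exact this ((hGf a x).2 hxa)
    rcases trichotomous_of r i j with h | h | h
    · exact key i j h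
    · exact absurd h hij
    · exact (key j i h).symm
  · -- locally finite
    refine hlf.subset fun i => ?_
    intro x hx
    exact (hGf i x).2 hx.1
  · -- functionally ambiguous
    intro i
    exact funcAmb_aux (f i) (g i) (hfc i) (hgc i) (hf01 i) (hg01 i)
  · -- refinement
    intro i
    exact ⟨i, fun x hx => (hGf i x).2 hx.1⟩
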